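/- If A is a p×p real positive semi-definite matrix of rank K whose first K columns are linearly independent, then there exists a unique matrix N in R^{p×K} such that A = N Nᵀ, N is mock lower triangular (N_{ij} = 0 for i < j), and the diagonal entries N_{ii} for 1 ≤ i ≤ K are all positive. -/

import Mathlib

open Matrix Finset InnerProductSpace

instance finWF' (K : ℕ) : WellFoundedLT (Fin K) := inferInstance

lemma gs_inner_self {E : Type*} [NormedAddCommGroup E] [InnerProductSpace ℝ E]
    {K : ℕ} (f : Fin K → E) (i : Fin K) :
    (inner ℝ (gramSchmidt ℝ f i) (f i) : ℝ) = ‖gramSchmidt ℝ f i‖ ^ 2 := by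
  conv_lhs => rw [gramSchmidt_def'' ℝ f i]
  rw [inner_add_right, inner_sum, real_inner_self_eq_norm_sq]
  refine add_eq_left.mpr ?_
  exact Finset.sum_eq_zero fun k hk => by
    rw [inner_smul_right, gramSchmidt_orthogonal ℝ f (Finset.mem_Iio.1 hk).ne', mul_zero]

lemma gs_diag_pos {E : Type*} [NormedAddCommGroup E] [InnerProductSpace ℝ E]
    [FiniteDimensional ℝ E] {K : ℕ} (h : Module.finrank ℝ E = Fintype.card (Fin K))
    {f : Fin K → E} (hf : LinearIndependent ℝ f) (i : Fin K) :
    0 < (inner ℝ (gramSchmidtOrthonormalBasis h f i) (f i) : ℝ) := by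
  have hg : gramSchmidt ℝ f i ≠ 0 := gramSchmidt_ne_zero i hf
  have hn : gramSchmidtNormed ℝ f i ≠ 0 := by
    simp only [gramSchmidtNormed]
    exact smul_ne_zero (by simpa using hg) hg
  rw [gramSchmidtOrthonormalBasis_apply h hn, gramSchmidtNormed, real_inner_smul_left,
    gs_inner_self]
  have : (0:ℝ) < ‖gramSchmidt ℝ f i‖ := norm_pos_iff.2 hg
  positivity


lemma chol_upper_unique {K : ℕ} (U U' : Matrix (Fin K) (Fin K) ℝ)
    (hU : U.BlockTriangular id) (hU' : U'.BlockTriangular id)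
    (hd : ∀ i, 0 < U i i) (hd' : ∀ i, 0 < U' i i)
    (h : Uᵀ * U = U'ᵀ * U') : U = U' := by
  have hdetU : IsUnit U.det := by
    rw [Matrix.det_of_upperTriangular hU]
    exact (Finset.prod_pos fun i _ => hd i).ne'.isUnit
  have hdetU' : IsUnit U'.det := by
    rw [Matrix.det_of_upperTriangular hU']
    exact (Finset.prod_pos fun i _ => hd' i).ne'.isUnit
  haveI := U.invertibleOfIsUnitDet hdetU
  haveI := U'.invertibleOfIsUnitDet hdetU'
  haveI : Invertible Uᵀ := Matrix.invertibleTranspose U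
  haveI : Invertible U'ᵀ := Matrix.invertibleTranspose U'
  set D := U * U'⁻¹ with hDdef
  have hD2 : D = (Uᵀ)⁻¹ * U'ᵀ := by
    have h1 : Uᵀ * (U * U'⁻¹) = U'ᵀ := by
      rw [← Matrix.mul_assoc, h, Matrix.mul_assoc, Matrix.mul_inv_of_invertible, Matrix.mul_one]
    rw [hDdef, ← Matrix.inv_mul_cancel_left_of_invertible (A := Uᵀ) (U * U'⁻¹), h1]
  have hDupper : D.BlockTriangular id :=
    hU.mul (Matrix.blockTriangular_inv_of_blockTriangular hU')
  have hDlower : D.BlockTriangular (OrderDual.toDual ∘ id) := by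
    rw [hD2]
    exact (Matrix.blockTriangular_inv_of_blockTriangular hU.transpose).mul hU'.transpose
  have hDdiag : ∀ i j, i ≠ j → D i j = 0 := by
    intro i j hij
    rcases lt_or_gt_of_ne hij with h1 | h1
    · exact hDlower h1
    · exact hDupper h1
  have hU_eq : U = D * U' := by
    rw [hDdef, Matrix.inv_mul_cancel_right_of_invertible]
  have hDpos : ∀ i, 0 < D i i := by
    intro i
    have hUi : U i i = D i i * U' i i := by
      conv_lhs => rw [hU_eq]
      rw [Matrix.mul_apply]
      rw [Finset.sum_eq_single i (fun k _ hk => by rw [hDdiag i k (Ne.symm hk), zero_mul])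
        (fun hmem => absurd (Finset.mem_univ i) hmem)]
    have h0 := hd i
    rw [hUi] at h0
    nlinarith [hd' i]
  have hDD : Dᵀ * D = 1 := by
    have h2 : U'ᵀ * (Dᵀ * D) * U' = U'ᵀ * U' := by
      have e1 : U'ᵀ * (Dᵀ * D) * U' = (D * U')ᵀ * (D * U') := by
        rw [Matrix.transpose_mul D U']
        simp only [Matrix.mul_assoc]
      rw [e1, ← hU_eq, h]
    have h3 := congrArg (fun X => (U'ᵀ)⁻¹ * X * U'⁻¹) h2
    rw [Matrix.mul_assoc (U'ᵀ) (Dᵀ * D) U'] at h3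
    rw [Matrix.inv_mul_cancel_left_of_invertible, Matrix.inv_mul_cancel_left_of_invertible,
      Matrix.mul_assoc, Matrix.mul_inv_of_invertible, Matrix.mul_one] at h3
    exact h3
  have hD1 : ∀ i, D i i = 1 := by
    intro i
    have hsq : D i i * D i i = 1 := by
      have := congrFun (congrFun hDD i) i
      rw [Matrix.mul_apply] at this
      rw [Finset.sum_eq_single i (fun k _ hk => by
        rw [Matrix.transpose_apply, hDdiag k i hk, zero_mul])
        (fun hmem => absurd (Finset.mem_univ i) hmem)] at this
      rw [Matrix.transpose_apply] at this
      rw [this, Matrix.one_apply_eq]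
    rcases mul_self_eq_one_iff.mp hsq with h1 | h1
    · exact h1
    · exact absurd h1 (by have := hDpos i; intro hc; rw [hc] at this; linarith)
  have hDone : D = 1 := by
    ext i j
    by_cases hij : i = j
    · subst hij; rw [hD1, Matrix.one_apply_eq]
    · rw [hDdiag i j hij, Matrix.one_apply_ne hij]
  rw [hU_eq, hDone, Matrix.one_mul]

lemma reduced_cholesky_factor_unique (p K : ℕ) (hK : K ≤ p) (A : Matrix (Fin p) (Fin p) ℝ)
    (N M : Matrix (Fin p) (Fin K) ℝ)
    (hN : A = N * Nᵀ ∧ (∀ (i : Fin p) (j : Fin K), (i : ℕ) < (j : ℕ) → N i j = 0) ∧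
      (∀ i : Fin K, 0 < N (Fin.castLE hK i) i))
    (hM : A = M * Mᵀ ∧ (∀ (i : Fin p) (j : Fin K), (i : ℕ) < (j : ℕ) → M i j = 0) ∧
      (∀ i : Fin K, 0 < M (Fin.castLE hK i) i)) : N = M := by
  obtain ⟨hNA, hNtri, hNpos⟩ := hN
  obtain ⟨hMA, hMtri, hMpos⟩ := hM
  set L : Matrix (Fin K) (Fin K) ℝ := fun i j => N (Fin.castLE hK i) j with hL
  set L' : Matrix (Fin K) (Fin K) ℝ := fun i j => M (Fin.castLE hK i) j with hL'
  have hLU : Lᵀ.BlockTriangular id := by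
    intro i j hij
    exact hNtri _ _ hij
  have hLU' : L'ᵀ.BlockTriangular id := by
    intro i j hij
    exact hMtri _ _ hij
  have hdL : ∀ i, 0 < Lᵀ i i := fun i => hNpos i
  have hdL' : ∀ i, 0 < L'ᵀ i i := fun i => hMpos i
  have hblock : Lᵀᵀ * Lᵀ = L'ᵀᵀ * L'ᵀ := by
    rw [Matrix.transpose_transpose, Matrix.transpose_transpose]
    ext i j
    have e1 : (L * Lᵀ) i j = A (Fin.castLE hK i) (Fin.castLE hK j) := by
      rw [hNA, Matrix.mul_apply, Matrix.mul_apply]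
      rfl
    have e2 : (L' * L'ᵀ) i j = A (Fin.castLE hK i) (Fin.castLE hK j) := by
      rw [hMA, Matrix.mul_apply, Matrix.mul_apply]
      rfl
    rw [e1, e2]
  have hLL : L = L' := by
    have := chol_upper_unique Lᵀ L'ᵀ hLU hLU' hdL hdL' hblock
    calc L = Lᵀᵀ := (Matrix.transpose_transpose L).symm
      _ = L'ᵀᵀ := by rw [this]
      _ = L' := Matrix.transpose_transpose L'
  have hNL : N * Lᵀ = M * Lᵀ := by
    ext i j
    have e1 : (N * Lᵀ) i j = A i (Fin.castLE hK j) := by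
      rw [hNA, Matrix.mul_apply, Matrix.mul_apply]
      rfl
    have e2 : (M * Lᵀ) i j = A i (Fin.castLE hK j) := by
      rw [hMA, Matrix.mul_apply, Matrix.mul_apply]
      simp only [hLL]
      rfl
    rw [e1, e2]
  have hdet : IsUnit Lᵀ.det := by
    rw [Matrix.det_of_upperTriangular hLU]
    exact (Finset.prod_pos fun i _ => hdL i).ne'.isUnit
  haveI := Lᵀ.invertibleOfIsUnitDet hdet
  have := congrArg (fun X => X * (Lᵀ)⁻¹) hNL
  simpa only [Matrix.mul_inv_cancel_right_of_invertible] using this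

lemma reduced_cholesky_exists (p K : ℕ) (hK : K ≤ p)
    (A : Matrix (Fin p) (Fin p) ℝ)
    (hpsd : A.PosSemidef) (hrank : A.rank = K)
    (hind : LinearIndependent ℝ
      (fun j : Fin K => fun i : Fin p => A i (Fin.castLE hK j))) :
    ∃ N : Matrix (Fin p) (Fin K) ℝ,
      A = N * Nᵀ ∧
      (∀ (i : Fin p) (j : Fin K), (i : ℕ) < (j : ℕ) → N i j = 0) ∧
      (∀ i : Fin K, 0 < N (Fin.castLE hK i) i) := by
  classical
  obtain ⟨B, hB⟩ : ∃ B : Matrix (Fin p) (Fin p) ℝ, A = star B * B := by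
    open scoped MatrixOrder in exact CStarAlgebra.nonneg_iff_eq_star_mul_self.mp hpsd.nonneg
  have hBT : A = Bᵀ * B := by
    rw [hB]; congr 1
  let e := WithLp.linearEquiv 2 ℝ (Fin p → ℝ)
  let v : Fin p → EuclideanSpace ℝ (Fin p) := fun j => e.symm (Bᵀ j)
  have hAv : ∀ i j, A i j = (inner ℝ (v i) (v j) : ℝ) := by
    intro i j
    rw [hBT]
    simp only [Matrix.mul_apply, PiLp.inner_apply, RCLike.inner_apply, starRingEnd_apply,
      star_trivial, v, e]
    exact Finset.sum_congr rfl fun x _ => by rw [mul_comm]; rfl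
  set W : Submodule ℝ (EuclideanSpace ℝ (Fin p)) :=
    (Submodule.span ℝ (Set.range Bᵀ)).map (e.symm : (Fin p → ℝ) →ₗ[ℝ] EuclideanSpace ℝ (Fin p))
    with hW
  have hfin : Module.finrank ℝ W = K := by
    rw [hW, LinearEquiv.finrank_map_eq, show Set.range (Bᵀ : Fin p → Fin p → ℝ) = Set.range B.col from rfl,
      ← Matrix.rank_eq_finrank_span_cols, ← hrank, hBT,
      Matrix.rank_transpose_mul_self]
  have hmem : ∀ j, v j ∈ W := fun j =>
    ⟨Bᵀ j, Submodule.subset_span ⟨j, rfl⟩, rfl⟩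
  let w : Fin p → W := fun j => ⟨v j, hmem j⟩
  let fam : Fin K → W := fun j => w (Fin.castLE hK j)
  have hfam : LinearIndependent ℝ fam := by
    rw [Fintype.linearIndependent_iff]
    intro c hc
    have hc' : ∑ j, c j • v (Fin.castLE hK j) = 0 := by
      have := congrArg (Subtype.val) hc
      simpa [fam, w] using this
    have hcol : ∀ g : Fin K → ℝ, (∑ j, g j • (fun i : Fin p => A i (Fin.castLE hK j))) = 0 →
        ∀ j, g j = 0 := Fintype.linearIndependent_iff.mp hind
    apply hcol c
    funext i
    have : (inner ℝ (v i) (∑ j, c j • v (Fin.castLE hK j)) : ℝ) = 0 := by rw [hc', inner_zero_right]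
    rw [inner_sum] at this
    simp only [inner_smul_right] at this
    simpa [hAv, Finset.sum_apply] using this
  have hcard : Module.finrank ℝ W = Fintype.card (Fin K) := by simpa using hfin
  let b := gramSchmidtOrthonormalBasis hcard fam
  refine ⟨fun i j => (inner ℝ (w i) (b j) : ℝ), ?_, ?_, ?_⟩
  · ext i k
    erw [Matrix.mul_apply]
    change A i k = ∑ j, (inner ℝ (w i) (b j) : ℝ) * (inner ℝ (w k) (b j) : ℝ)
    have : ∑ j, (inner ℝ (w i) (b j) : ℝ) * (inner ℝ (w k) (b j) : ℝ)
        = ∑ j, (inner ℝ (w i) (b j) : ℝ) * (inner ℝ (b j) (w k) : ℝ) := by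
      refine Finset.sum_congr rfl fun j _ => by rw [real_inner_comm (w k) (b j)]
    rw [this, b.sum_inner_mul_inner]
    rw [hAv i k]
    exact (Submodule.coe_inner W (w i) (w k)).symm
  · intro i j hij
    dsimp only
    have hiK : (i : ℕ) < K := hij.trans j.isLt
    have hwi : w i = fam ⟨i.1, hiK⟩ := rfl
    rw [hwi, real_inner_comm]
    exact gramSchmidtOrthonormalBasis_inv_triangular hcard fam (by simpa [Fin.lt_def] using hij)
  · intro i
    dsimp only
    have : w (Fin.castLE hK i) = fam i := rfl
    rw [this, real_inner_comm]
    exact gs_diag_pos hcard hfam i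

/-- existence and uniqueness of the reduced Cholesky factor of a
restricted PSD matrix. -/
theorem reduced_cholesky_exists_unique (p K : ℕ) (hK : K ≤ p)
    (A : Matrix (Fin p) (Fin p) ℝ)
    (hpsd : A.PosSemidef) (hrank : A.rank = K)
    (hind : LinearIndependent ℝ
      (fun j : Fin K => fun i : Fin p => A i (Fin.castLE hK j))) :
    ∃! N : Matrix (Fin p) (Fin K) ℝ,
      A = N * Nᵀ ∧
      (∀ (i : Fin p) (j : Fin K), (i : ℕ) < (j : ℕ) → N i j = 0) ∧
      (∀ i : Fin K, 0 < N (Fin.castLE hK i) i) := by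
  obtain ⟨N, hN⟩ := reduced_cholesky_exists p K hK A hpsd hrank hind
  exact ⟨N, hN, fun M hM => reduced_cholesky_factor_unique p K hK A M N hM hN⟩
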